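/- For every player p, every history h, and every semantics ⋆ ∈ {S, A}: if a Dirac move a of player p at last(h) is not ⋆-dominated at h by any other Dirac move, then a is ⋆-admissible at h (i.e., a is not ⋆-dominated at h by any randomised move). -/

import Mathlib

open scoped Classical

noncomputable section

/-- Run of a deterministic automaton along an infinite word. -/
def autRun {α Q : Type} (q0 : Q) (d : Q → α → Q) (ρ : ℕ → α) : ℕ → Q
  | 0 => q0
  | k + 1 => d (autRun q0 d ρ k) (ρ k)

/-- A concurrent game played on a finite graph. -/
structure ConcGame where
  S : Type
  A : Type
  P : Type
  [fS : Fintype S]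
  [fA : Fintype A]
  [fP : Fintype P]
  [dS : DecidableEq S]
  [dA : DecidableEq A]
  [dP : DecidableEq P]
  init : S
  act : P → S → Set A
  act_nonempty : ∀ p s, (act p s).Nonempty
  tr : S → (P → A) → S

open MeasureTheory

namespace ConcGame

attribute [instance] ConcGame.fS ConcGame.fA ConcGame.fP ConcGame.dS ConcGame.dA ConcGame.dP

inductive Sem where
  | Sure : Sem
  | Almost : Sem

variable (G : ConcGame)

instance : MeasurableSpace G.S := ⊤

/-- Randomised move of player `p` at state `s`: a probability distribution on `act p s`. -/
def Mixed (p : G.P) (s : G.S) : Type :=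
  { f : G.A → ℝ // (∀ a, 0 ≤ f a) ∧ (∑ a, f a) = 1 ∧ ∀ a, f a ≠ 0 → a ∈ G.act p s }

/-- Support of a randomised move. -/
def Supp {p : G.P} {s : G.S} (α : G.Mixed p s) : Set G.A := { a | α.1 a ≠ 0 }

/-- A randomised move is Dirac if it puts all mass on one action. -/
def IsDirac {p : G.P} {s : G.S} (α : G.Mixed p s) : Prop := ∃ a, α.1 a = 1

/-- The Dirac move on action `a`. -/
def dirac (p : G.P) (s : G.S) (a : G.A) (ha : a ∈ G.act p s) : G.Mixed p s :=
  ⟨fun b => if b = a then 1 else 0, by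
    refine ⟨fun b => ?_, ?_, fun b hb => ?_⟩
    · by_cases h : b = a <;> simp [h]
    · simp
    · by_cases h : b = a
      · subst h; exact ha
      · simp [h] at hb⟩

/-- The last state of a history (the initial state for the empty list). -/
def lastS (l : List G.S) : G.S := l.getLast?.getD G.init

/-- One step of the game graph. -/
def Step (s s' : G.S) : Prop :=
  ∃ m : G.P → G.A, (∀ p, m p ∈ G.act p s) ∧ G.tr s m = s'

/-- Histories: finite paths starting at the initial state. -/
def IsHistory (l : List G.S) : Prop := l.head? = some G.init ∧ l.Chain' G.Step

/-- Runs: infinite sequences of states. -/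
abbrev Run : Type := ℕ → G.S

/-- A strategy of player `p`: maps each history to a randomised move at its last state. -/
def Strategy (p : G.P) : Type := (l : List G.S) → G.Mixed p (G.lastS l)

/-- A profile of strategies, one per player. -/
def Profile : Type := ∀ p : G.P, G.Strategy p

/-- A strategy for the coalition `-p` of all players other than `p`. -/
def CoStrategy (p : G.P) : Type := ∀ q : G.P, q ≠ p → G.Strategy q

/-- Combining a strategy of `p` with a coalition strategy of `-p` into a profile. -/
def combine {p : G.P} (σ : G.Strategy p) (τ : G.CoStrategy p) : G.Profile :=
  fun q => if h : q = p then (by subst h; exact σ) else τ q h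

/-- One-step transition probability when each player independently samples its move. -/
def stepProb (s : G.S) (β : G.P → G.A → ℝ) (s' : G.S) : ℝ :=
  ∑ m ∈ Finset.univ.filter (fun m : G.P → G.A => G.tr s m = s'), ∏ p, β p (m p)

/-- Probability of the cylinder of a history under a profile. -/
def cylProb (σv : G.Profile) (l : List G.S) : ℝ :=
  ∏ i ∈ Finset.range (l.length - 1),
    G.stepProb (G.lastS (l.take (i + 1))) (fun p => (σv p (l.take (i + 1))).1)
      (G.lastS (l.take (i + 2)))

/-- The cylinder of a finite word: runs having it as a prefix. -/
def Cyl (l : List G.S) : Set G.Run := { ρ | ∀ i, i < l.length → ρ i = l.getD i G.init }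

/-- Histories with positive probability under a profile. -/
def HistOf (σv : G.Profile) : Set (List G.S) :=
  { l | G.IsHistory l ∧ 0 < G.cylProb σv l }

/-- The prefix of length `k+1` of a run. -/
def prefixList (ρ : G.Run) (k : ℕ) : List G.S := (List.range (k + 1)).map ρ

/-- Outcome of a profile: runs all of whose prefixes have positive probability. -/
def Outcome (σv : G.Profile) : Set G.Run := { ρ | ∀ k, G.prefixList ρ k ∈ G.HistOf σv }

/-- Histories compatible with a single strategy of player `p`. -/
def HistOfS {p : G.P} (σ : G.Strategy p) : Set (List G.S) :=
  ⋃ τ : G.CoStrategy p, G.HistOf (G.combine σ τ)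

/-- `Pr` assigns to every profile a probability measure on runs which agrees with the
    inductively defined cylinder probabilities. -/
def ValidPr (Pr : G.Profile → Measure G.Run) : Prop :=
  (∀ σv, IsProbabilityMeasure (Pr σv)) ∧
    ∀ σv l, G.IsHistory l → Pr σv (G.Cyl l) = ENNReal.ofReal (G.cylProb σv l)

/-- A profile wins a condition under the sure / almost-sure semantics. -/
def Wins (Pr : G.Profile → Measure G.Run) : Sem → G.Profile → Set G.Run → Prop
  | Sem.Sure, σv, Φ => G.Outcome σv ⊆ Φ
  | Sem.Almost, σv, Φ => Pr σv Φ = 1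

/-- A profile wins a condition from a given history, under each semantics. -/
def WinsFrom (Pr : G.Profile → Measure G.Run) : Sem → G.Profile → Set G.Run → List G.S → Prop
  | Sem.Sure, σv, Φ, l => G.Outcome σv ∩ G.Cyl l ⊆ Φ
  | Sem.Almost, σv, Φ, l => l ∈ G.HistOf σv ∧ Pr σv (Φ ∩ G.Cyl l) / Pr σv (G.Cyl l) = 1

/-- A strategy of `p` is winning if it wins against every coalition strategy. -/
def StratWins (Pr : G.Profile → Measure G.Run) (st : Sem) {p : G.P} (σ : G.Strategy p)
    (Φ : Set G.Run) : Prop :=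
  ∀ τ : G.CoStrategy p, G.Wins Pr st (G.combine σ τ) Φ

/-- A strategy of `p` is winning from a history `l`. -/
def StratWinsFrom (Pr : G.Profile → Measure G.Run) (st : Sem) {p : G.P} (σ : G.Strategy p)
    (Φ : Set G.Run) (l : List G.S) : Prop :=
  ∀ τ : G.CoStrategy p, G.WinsFrom Pr st (G.combine σ τ) Φ l

/-- Weak dominance between strategies of player `p`. -/
def WDom (Pr : G.Profile → Measure G.Run) (win : G.P → Set G.Run) (st : Sem) {p : G.P}
    (σ σ' : G.Strategy p) : Prop :=
  ∀ τ : G.CoStrategy p,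
    G.Wins Pr st (G.combine σ τ) (win p) → G.Wins Pr st (G.combine σ' τ) (win p)

/-- Strict dominance between strategies. -/
def SDom (Pr : G.Profile → Measure G.Run) (win : G.P → Set G.Run) (st : Sem) {p : G.P}
    (σ σ' : G.Strategy p) : Prop :=
  G.WDom Pr win st σ σ' ∧ ¬ G.WDom Pr win st σ' σ

/-- Equivalence of strategies. -/
def EquivS (Pr : G.Profile → Measure G.Run) (win : G.P → Set G.Run) (st : Sem) {p : G.P}
    (σ σ' : G.Strategy p) : Prop :=
  G.WDom Pr win st σ σ' ∧ G.WDom Pr win st σ' σ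

/-- A strategy is admissible iff it is not dominated. -/
def Admissible (Pr : G.Profile → Measure G.Run) (win : G.P → Set G.Run) (st : Sem) {p : G.P}
    (σ : G.Strategy p) : Prop :=
  ∀ σ' : G.Strategy p, ¬ G.SDom Pr win st σ σ'

/-- Weak dominance between randomised moves at a history. -/
def MWDom (Pr : G.Profile → Measure G.Run) (win : G.P → Set G.Run) (st : Sem) {p : G.P}
    (l : List G.S) (α α' : G.Mixed p (G.lastS l)) : Prop :=
  ∀ σ : G.Strategy p, l ∈ G.HistOfS σ → σ l = α →
    ∃ σ' : G.Strategy p, σ' l = α' ∧ G.WDom Pr win st σ σ'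

/-- Equivalence of moves at a history. -/
def MEquiv (Pr : G.Profile → Measure G.Run) (win : G.P → Set G.Run) (st : Sem) {p : G.P}
    (l : List G.S) (α α' : G.Mixed p (G.lastS l)) : Prop :=
  G.MWDom Pr win st l α α' ∧ G.MWDom Pr win st l α' α

/-- Strict dominance between moves at a history. -/
def MSDom (Pr : G.Profile → Measure G.Run) (win : G.P → Set G.Run) (st : Sem) {p : G.P}
    (l : List G.S) (α α' : G.Mixed p (G.lastS l)) : Prop :=
  G.MWDom Pr win st l α α' ∧ ¬ G.MWDom Pr win st l α' α

/-- A move is admissible at a history iff no move dominates it there. -/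
def MAdmissible (Pr : G.Profile → Measure G.Run) (win : G.P → Set G.Run) (st : Sem) {p : G.P}
    (l : List G.S) (α : G.Mixed p (G.lastS l)) : Prop :=
  ∀ α' : G.Mixed p (G.lastS l), ¬ G.MSDom Pr win st l α α'

/-- A strategy is locally admissible (LA) iff it plays admissible moves at every history. -/
def LA (Pr : G.Profile → Measure G.Run) (win : G.P → Set G.Run) (st : Sem) {p : G.P}
    (σ : G.Strategy p) : Prop :=
  ∀ l, G.IsHistory l → G.MAdmissible Pr win st l (σ l)

/-- The value of a history w.r.t. a strategy: 1 if winning from it, 0 if the coalition can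
    both let the strategy win and make it lose, -1 otherwise. -/
def ValStrat (Pr : G.Profile → Measure G.Run) (win : G.P → Set G.Run) (st : Sem) {p : G.P}
    (l : List G.S) (σ : G.Strategy p) : ℤ :=
  if G.StratWinsFrom Pr st σ (win p) l then 1
  else if (∃ τ : G.CoStrategy p, G.WinsFrom Pr st (G.combine σ τ) (win p) l) then 0
  else -1

/-- The value of a history for player `p`: the best value over the player's strategies. -/
def ValH (Pr : G.Profile → Measure G.Run) (win : G.P → Set G.Run) (st : Sem) (p : G.P)
    (l : List G.S) : ℤ :=
  if (∃ σ : G.Strategy p, G.ValStrat Pr win st l σ = 1) then 1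
  else if (∃ σ : G.Strategy p, G.ValStrat Pr win st l σ = 0) then 0
  else -1

/-- Strongly cooperative optimal strategies. -/
def SCO (Pr : G.Profile → Measure G.Run) (win : G.P → Set G.Run) (st : Sem) {p : G.P}
    (σ : G.Strategy p) : Prop :=
  ∀ l ∈ G.HistOfS σ, G.ValStrat Pr win st l σ = G.ValH Pr win st p l

/-- The full action tuple obtained from `a` for `p` and `c` for the coalition. -/
def combAct {p : G.P} (a : G.A) (c : ∀ q : G.P, q ≠ p → G.A) : G.P → G.A :=
  fun q => if h : q = p then (by subst h; exact a) else c q h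

/-- The tuple of one-step distributions obtained from a move of `p` and coalition moves. -/
def combMix {p : G.P} {s : G.S} (α : G.Mixed p s) (γ : ∀ q : G.P, q ≠ p → G.Mixed q s) :
    G.P → G.A → ℝ :=
  fun q => if h : q = p then (by subst h; exact α.1) else (γ q h).1

/-- Simple safety games: each player loses exactly the runs visiting its bad states, and
    bad states are closed under steps. -/
def SimpleSafety (win : G.P → Set G.Run) : Prop :=
  ∃ Bad : G.P → Set G.S,
    (∀ p, win p = { ρ : G.Run | ∀ i, ρ i ∉ Bad p }) ∧
    ∀ p s, s ∈ Bad p → ∀ s', G.Step s s' → s' ∈ Bad p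

/-- Prefix-independent winning conditions. -/
def PrefIndep (Φ : Set G.Run) : Prop :=
  ∀ (ρ : G.Run) (k : ℕ), ρ ∈ Φ ↔ (fun i => ρ (i + k)) ∈ Φ

/-- `stf` and `plf` give the unique state and player where each action is available. -/
def UniqueAvail (stf : G.A → G.S) (plf : G.A → G.P) : Prop :=
  ∀ (q : G.P) (s : G.S) (a : G.A), a ∈ G.act q s → plf a = q ∧ stf a = s

/-- An action of player `q` is ⋆-LA if its Dirac move is admissible at every history where
    it is available. -/
def LAAct (Pr : G.Profile → Measure G.Run) (win : G.P → Set G.Run) (st : Sem)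
    (q : G.P) (a : G.A) : Prop :=
  ∀ (l : List G.S) (_ : G.IsHistory l) (ha : a ∈ G.act q (G.lastS l)),
    G.MAdmissible Pr win st l (G.dirac q (G.lastS l) a ha)

/-- Current `S`-component of a history of the derived game. -/
def dCur (l : List (G.S × (G.P → G.A))) : G.S := (l.getLast?.map Prod.fst).getD G.init

/-- Legal joint action in the derived game: available and ⋆-LA for every player. -/
def DLegal (Pr : G.Profile → Measure G.Run) (win : G.P → Set G.Run) (st : Sem)
    (s : G.S) (m : G.P → G.A) : Prop :=
  ∀ q, m q ∈ G.act q s ∧ G.LAAct Pr win st q (m q)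

/-- Histories of the derived game `G⋆_p` (the part after the initial state). -/
def IsDHistory (Pr : G.Profile → Measure G.Run) (win : G.P → Set G.Run) (st : Sem)
    (l : List (G.S × (G.P → G.A))) : Prop :=
  ∀ i (hi : i < l.length),
    G.DLegal Pr win st (G.dCur (l.take i)) (l.get ⟨i, hi⟩).2 ∧
    (l.get ⟨i, hi⟩).1 = G.tr (G.dCur (l.take i)) (l.get ⟨i, hi⟩).2

/-- Observation of a derived history: the projection to states. -/
def oHist (l : List (G.S × (G.P → G.A))) : List G.S := G.init :: l.map Prod.fst

/-- Observation-based Dirac strategies of player `p` in the derived game. -/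
def IsDStrategy (Pr : G.Profile → Measure G.Run) (win : G.P → Set G.Run) (st : Sem)
    (p : G.P) (σb : List (G.S × (G.P → G.A)) → G.A) : Prop :=
  (∀ l, G.IsDHistory Pr win st l → σb l ∈ G.act p (G.dCur l) ∧ G.LAAct Pr win st p (σb l)) ∧
  (∀ l l', G.oHist l = G.oHist l' → σb l = σb l')

/-- `σb` is a realisation of the strategy `σ` in the derived game. -/
def IsRealisation (Pr : G.Profile → Measure G.Run) (win : G.P → Set G.Run) (st : Sem)
    (p : G.P) (σ : G.Strategy p) (σb : List (G.S × (G.P → G.A)) → G.A) : Prop :=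
  G.IsDStrategy Pr win st p σb ∧
  ∀ l, G.IsDHistory Pr win st l → σb l ∈ G.Supp (σ (G.oHist l))

/-- The prefix of length `k` of a derived run. -/
def dPrefix (ρb : ℕ → G.S × (G.P → G.A)) (k : ℕ) : List (G.S × (G.P → G.A)) :=
  (List.range k).map ρb

/-- Outcome of a player-`p` strategy in the derived game: all derived runs consistent with
    it in which all players play legal ⋆-LA Dirac actions. -/
def DOutcome (Pr : G.Profile → Measure G.Run) (win : G.P → Set G.Run) (st : Sem)
    (p : G.P) (σb : List (G.S × (G.P → G.A)) → G.A) : Set (ℕ → G.S × (G.P → G.A)) :=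
  { ρb | ∀ k,
      G.DLegal Pr win st (G.dCur (G.dPrefix ρb k)) (ρb k).2 ∧
      (ρb k).2 p = σb (G.dPrefix ρb k) ∧
      (ρb k).1 = G.tr (G.dCur (G.dPrefix ρb k)) (ρb k).2 }

/-- Observation of a derived run: the induced run of `G`. -/
def oRun (ρb : ℕ → G.S × (G.P → G.A)) : G.Run :=
  fun k => match k with
  | 0 => G.init
  | Nat.succ n => (ρb n).1

/-- Value of a state for player `q` (well defined for prefix-independent conditions). -/
def ValSt (Pr : G.Profile → Measure G.Run) (win : G.P → Set G.Run) (st : Sem)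
    (q : G.P) (s : G.S) : ℤ :=
  if (∃ l, G.IsHistory l ∧ G.lastS l = s ∧ G.ValH Pr win st q l = 1) then 1
  else if (∃ l, G.IsHistory l ∧ G.lastS l = s ∧ G.ValH Pr win st q l = 0) then 0
  else -1

/-- States of the derived game where player `q` has value 0 but another choice of the
    coalition could have helped `q`. -/
def Help (Pr : G.Profile → Measure G.Run) (win : G.P → Set G.Run) (st : Sem)
    (stf : G.A → G.S) (q : G.P) : Set (G.S × (G.P → G.A)) :=
  { x | G.ValSt Pr win st q x.1 = 0 ∧
      ∃ c : ∀ r : G.P, r ≠ q → G.A, (∀ r hr, c r hr ∈ G.act r (stf (x.2 q))) ∧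
        0 ≤ G.ValSt Pr win st q (G.tr (stf (x.2 q)) (G.combAct (x.2 q) c)) ∧
        G.tr (stf (x.2 q)) (G.combAct (x.2 q) c) ≠ x.1 }

/-- The formula φ⁰_q evaluated on a derived run. -/
def phi0 (Pr : G.Profile → Measure G.Run) (win : G.P → Set G.Run) (st : Sem)
    (stf : G.A → G.S) (q : G.P) (ρb : ℕ → G.S × (G.P → G.A)) : Prop :=
  (∃ k, G.ValSt Pr win st q (G.oRun ρb k) ≠ 0) ∨
  (G.oRun ρb ∈ win q) ∨
  (∀ k, ∃ j, k ≤ j ∧ ρb j ∈ G.Help Pr win st stf q)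

/-- The formula φ¹_q evaluated on a derived run. -/
def phi1 (Pr : G.Profile → Measure G.Run) (win : G.P → Set G.Run) (st : Sem)
    (q : G.P) (ρb : ℕ → G.S × (G.P → G.A)) : Prop :=
  (∃ k, G.ValSt Pr win st q (G.oRun ρb k) = 1) → G.oRun ρb ∈ win q

/-- ω-regular sets of runs: recognised by a deterministic finite parity automaton. -/
def IsOmegaRegular (Φ : Set G.Run) : Prop :=
  ∃ (Q : Type) (_ : Fintype Q) (q0 : Q) (d : Q → G.S → Q) (c : Q → ℕ),
    Φ = { ρ : G.Run | ∃ n, Even n ∧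
      Set.Infinite { k | c (autRun q0 d ρ k) = n } ∧
      ∀ m, Set.Infinite { k | c (autRun q0 d ρ k) = m } → n ≤ m }

/-- Finite-memory strategies: realised by a finite stochastic Moore machine. -/
def FiniteMemory {p : G.P} (σ : G.Strategy p) : Prop :=
  ∃ (M : Type) (_ : Fintype M) (m0 : M) (upd : M → G.S → M)
    (out : M → (s : G.S) → G.Mixed p s),
    ∀ l : List G.S, σ l = out (l.foldl upd m0) (G.lastS l)


/-! ### Auxiliary machinery for `stmt2` -/

section Stmt2Aux

variable (G : ConcGame)

lemma stepProb_nonneg (s s' : G.S) (β : G.P → G.A → ℝ) (hβ : ∀ q a, 0 ≤ β q a) :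
    0 ≤ G.stepProb s β s' :=
  Finset.sum_nonneg fun m _ => Finset.prod_nonneg fun q _ => hβ q (m q)

lemma cylProb_nonneg (σv : G.Profile) (w : List G.S) : 0 ≤ G.cylProb σv w :=
  Finset.prod_nonneg fun _ _ =>
    G.stepProb_nonneg _ _ _ fun q a => (σv q _).2.1 a

lemma stepProb_sum_one (s : G.S) (β : G.P → G.A → ℝ) (hβ : ∀ q, ∑ a, β q a = 1) :
    ∑ s', G.stepProb s β s' = 1 := by
  unfold ConcGame.stepProb
  rw [Finset.sum_fiberwise_eq_sum_filter Finset.univ Finset.univ (fun m => G.tr s m)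
    (fun m => ∏ q, β q (m q))]
  have : Finset.univ.filter (fun m : G.P → G.A => G.tr s m ∈ Finset.univ) = Finset.univ := by
    simp
  rw [this, ← Fintype.piFinset_univ, ← Finset.prod_univ_sum]
  simp [hβ]

lemma combine_apply_self {p : G.P} (σ : G.Strategy p) (τ : G.CoStrategy p) :
    G.combine σ τ p = σ := by
  unfold ConcGame.combine
  rw [dif_pos rfl]

lemma combine_apply_ne {p q : G.P} (σ : G.Strategy p) (τ : G.CoStrategy p) (h : q ≠ p) :
    G.combine σ τ q = τ q h := by
  unfold ConcGame.combine
  rw [dif_neg h]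

end Stmt2Aux

section Stmt2Aux2

variable (G : ConcGame)

/-- The strategy `σ` updated at history `l` to play the Dirac move on `c` (when legal). -/
def updS {p : G.P} (l : List G.S) (σ : G.Strategy p) (c : G.A) : G.Strategy p :=
  fun l' =>
    if h : l' = l ∧ c ∈ G.act p (G.lastS l) then
      ⟨fun x => if x = c then 1 else 0, by
        refine ⟨fun x => ?_, ?_, fun x hx => ?_⟩
        · by_cases hx : x = c <;> simp [hx]
        · simp
        · by_cases hxc : x = c
          · subst hxc; rw [h.1]; exact h.2
          · simp [hxc] at hx⟩
    else σ l'

lemma updS_apply_ne {p : G.P} (l : List G.S) (σ : G.Strategy p) (c : G.A)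
    {l' : List G.S} (h : l' ≠ l) : G.updS l σ c l' = σ l' := by
  unfold ConcGame.updS
  exact dif_neg (show ¬ (l' = l ∧ c ∈ G.act p (G.lastS l)) from fun h' => h h'.1)

lemma updS_val_self {p : G.P} (l : List G.S) (σ : G.Strategy p) {c : G.A}
    (hc : c ∈ G.act p (G.lastS l)) :
    (G.updS l σ c l).1 = fun x => if x = c then 1 else 0 := by
  unfold ConcGame.updS
  exact congrArg Subtype.val (dif_pos (show l = l ∧ c ∈ G.act p (G.lastS l) from ⟨rfl, hc⟩))

lemma updS_apply_self {p : G.P} (l : List G.S) (σ : G.Strategy p) {c : G.A}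
    (hc : c ∈ G.act p (G.lastS l)) :
    G.updS l σ c l = G.dirac p (G.lastS l) c hc :=
  Subtype.ext (by rw [G.updS_val_self l σ hc]; rfl)

lemma lastS_take (w : List G.S) (i : ℕ) (h : i < w.length) :
    G.lastS (w.take (i + 1)) = w[i] := by
  unfold ConcGame.lastS
  have hlen : (w.take (i + 1)).length = i + 1 := by
    rw [List.length_take]; omega
  rw [List.getLast?_eq_getElem?, hlen]
  simp only [Nat.add_sub_cancel, List.getElem?_take]
  simp [List.getElem?_eq_getElem h]

lemma lastS_concat (u : List G.S) (s' : G.S) : G.lastS (u ++ [s']) = s' := by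
  unfold ConcGame.lastS
  rw [List.getLast?_concat]
  rfl

lemma cylProb_concat (σv : G.Profile) (u : List G.S) (hu : u ≠ []) (s' : G.S) :
    G.cylProb σv (u ++ [s'])
      = G.cylProb σv u * G.stepProb (G.lastS u) (fun q => (σv q u).1) s' := by
  have hm : 1 ≤ u.length := List.length_pos_iff.2 hu
  unfold ConcGame.cylProb
  have h1 : (u ++ [s']).length - 1 = (u.length - 1) + 1 := by
    rw [List.length_append]; simp; omega
  rw [h1, Finset.prod_range_succ]
  congr 1
  · apply Finset.prod_congr rfl
    intro i hi
    rw [Finset.mem_range] at hi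
    rw [List.take_append_of_le_length (by omega), List.take_append_of_le_length (by omega)]
  · have e1 : u.length - 1 + 1 = u.length := by omega
    have e2 : (u ++ [s']).take u.length = u := by
      rw [List.take_append_of_le_length le_rfl, List.take_length]
    have e3 : (u ++ [s']).take (u.length + 1) = u ++ [s'] := by
      apply List.take_of_length_le
      rw [List.length_append]; simp
    have e1' : u.length - 1 + 2 = u.length + 1 := by omega
    rw [e1, e1', e2, e3, G.lastS_concat]

lemma cylProb_eq_zero_of_not_chain (σv : G.Profile) (w : List G.S)
    (hw : ¬ List.Chain' G.Step w) : G.cylProb σv w = 0 := by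
  rw [show List.Chain' G.Step w ↔ List.IsChain G.Step w from Iff.rfl, List.isChain_iff_getElem] at hw
  push_neg at hw
  obtain ⟨i, hi, hstep⟩ := hw
  unfold ConcGame.cylProb
  apply Finset.prod_eq_zero (Finset.mem_range.2 (show i < w.length - 1 by omega))
  have h1 : G.lastS (w.take (i + 1)) = w[i]'(by omega) :=
    G.lastS_take w i (by omega)
  have h2 : G.lastS (w.take (i + 2)) = w[i + 1]'(by omega) :=
    G.lastS_take w (i + 1) (by omega)
  rw [h2]
  apply Finset.sum_eq_zero
  intro m hm
  rw [Finset.mem_filter] at hm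
  by_contra hne
  apply hstep
  refine ⟨m, fun q => ?_, by rw [← h1]; exact hm.2⟩
  · have hfac : (σv q (w.take (i + 1))).1 (m q) ≠ 0 := by
      intro h0
      exact hne (Finset.prod_eq_zero (Finset.mem_univ q) h0)
    have := (σv q (w.take (i + 1))).2.2.2 (m q) hfac
    rwa [h1] at this

/-- `cylProb` extended by 0 to non-histories (via the head test; non-chains give 0 anyway). -/
def chi (σv : G.Profile) (w : List G.S) : ℝ :=
  if w.head? = some G.init then G.cylProb σv w else 0

lemma chi_nonneg (σv : G.Profile) (w : List G.S) : 0 ≤ G.chi σv w := by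
  unfold ConcGame.chi
  split
  · exact G.cylProb_nonneg σv w
  · exact le_refl 0

lemma chi_concat (σv : G.Profile) (u : List G.S) (hu : u ≠ []) (s' : G.S) :
    G.chi σv (u ++ [s'])
      = G.chi σv u * G.stepProb (G.lastS u) (fun q => (σv q u).1) s' := by
  unfold ConcGame.chi
  have hhead : (u ++ [s']).head? = u.head? := by
    cases u with
    | nil => exact absurd rfl hu
    | cons a t => rfl
  rw [hhead]
  by_cases h : u.head? = some G.init
  · rw [if_pos h, if_pos h, G.cylProb_concat σv u hu s']
  · rw [if_neg h, if_neg h, zero_mul]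

lemma chi_sum (σv : G.Profile) (n : ℕ) :
    ∑ w : Fin (n + 1) → G.S, G.chi σv (List.ofFn w) = 1 := by
  induction n with
  | zero =>
    have hofn : ∀ w : Fin 1 → G.S, List.ofFn w = [w 0] := by intro w; simp
    have hval : ∀ w : Fin 1 → G.S, G.chi σv (List.ofFn w)
        = if w 0 = G.init then 1 else 0 := by
      intro w
      rw [hofn w]
      unfold ConcGame.chi ConcGame.cylProb
      simp
    simp_rw [hval]
    rw [← Equiv.sum_comp (Equiv.funUnique (Fin 1) G.S).symm
      (fun w => if w 0 = G.init then (1:ℝ) else 0)]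
    simp [Equiv.funUnique]
  | succ n IH =>
    rw [← Equiv.sum_comp (Fin.snocEquiv (fun _ => G.S))
      (fun w => G.chi σv (List.ofFn w))]
    have hofn : ∀ x : G.S × (Fin (n + 1) → G.S),
        List.ofFn (Fin.snocEquiv (fun _ => G.S) x) = List.ofFn x.2 ++ [x.1] := by
      intro x
      rw [List.ofFn_succ', List.concat_eq_append]
      congr 1
      · congr 1
        funext i
        simp [Fin.snocEquiv]
      · simp [Fin.snocEquiv]
    calc ∑ x : G.S × (Fin (n + 1) → G.S), G.chi σv (List.ofFn (Fin.snocEquiv (fun _ => G.S) x))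
        = ∑ x : G.S × (Fin (n + 1) → G.S), G.chi σv (List.ofFn x.2 ++ [x.1]) := by
          apply Finset.sum_congr rfl; intro x _; rw [hofn]
      _ = ∑ s : G.S, ∑ w : Fin (n + 1) → G.S, G.chi σv (List.ofFn w ++ [s]) :=
          Fintype.sum_prod_type _
      _ = ∑ w : Fin (n + 1) → G.S, ∑ s : G.S, G.chi σv (List.ofFn w ++ [s]) :=
          Finset.sum_comm
      _ = ∑ w : Fin (n + 1) → G.S, G.chi σv (List.ofFn w) := by
          apply Finset.sum_congr rfl; intro w _
          have hne : List.ofFn w ≠ ([] : List G.S) :=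
            List.ne_nil_of_length_pos (by simp)
          simp_rw [G.chi_concat σv (List.ofFn w) hne]
          rw [← Finset.mul_sum, G.stepProb_sum_one _ _ (fun q => (σv q _).2.2.1), mul_one]
      _ = 1 := IH

end Stmt2Aux2

section Stmt2Aux3

open MeasureTheory

variable (G : ConcGame)

/-- The collection of cylinders of finite words. -/
def CylSets : Set (Set G.Run) := Set.range fun l : List G.S => G.Cyl l

lemma getD_ofFn {n : ℕ} (w : Fin n → G.S) (i : ℕ) (h : i < n) (d : G.S) :
    (List.ofFn w).getD i d = w ⟨i, h⟩ := by
  rw [List.getD_eq_getElem _ _ (by simpa using h)]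
  simp

lemma measurableSet_cyl (l : List G.S) : MeasurableSet (G.Cyl l) := by
  have : G.Cyl l
      = ⋂ (i : ℕ) (_ : i < l.length), (fun ρ : G.Run => ρ i) ⁻¹' {l.getD i G.init} := by
    ext ρ
    simp [ConcGame.Cyl]
  rw [this]
  exact MeasurableSet.iInter fun i => MeasurableSet.iInter fun _ =>
    measurable_pi_apply i (MeasurableSpace.measurableSet_top)

lemma gen_eq :
    (inferInstance : MeasurableSpace G.Run) = MeasurableSpace.generateFrom G.CylSets := by
  apply le_antisymm
  · show MeasurableSpace.pi ≤ _
    refine iSup_le fun i => ?_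
    have hmeas : @Measurable G.Run G.S (MeasurableSpace.generateFrom G.CylSets) _
        (fun ρ => ρ i) := by
      intro t _
      have hset : (fun ρ : G.Run => ρ i) ⁻¹' t
          = ⋃ (w : Fin (i + 1) → G.S) (_ : w (Fin.last i) ∈ t), G.Cyl (List.ofFn w) := by
        ext ρ
        constructor
        · intro hρ
          refine Set.mem_iUnion.2 ⟨fun j => ρ j.1, Set.mem_iUnion.2 ⟨hρ, ?_⟩⟩
          intro j hj
          rw [List.length_ofFn] at hj
          rw [G.getD_ofFn _ j hj]
        · intro hρ
          obtain ⟨w, hw⟩ := Set.mem_iUnion.1 hρ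
          obtain ⟨hwt, hcyl⟩ := Set.mem_iUnion.1 hw
          have := hcyl i (by simp)
          rw [G.getD_ofFn _ i (Nat.lt_succ_self i)] at this
          show ρ i ∈ t
          rw [this]
          exact hwt
      rw [hset]
      exact MeasurableSet.iUnion fun w => MeasurableSet.iUnion fun _ =>
        MeasurableSpace.measurableSet_generateFrom ⟨List.ofFn w, rfl⟩
    exact hmeas.comap_le
  · exact MeasurableSpace.generateFrom_le (by rintro t ⟨l, rfl⟩; exact G.measurableSet_cyl l)

lemma measure_ext_cyl (μ ν : Measure G.Run) [IsProbabilityMeasure μ] [IsProbabilityMeasure ν]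
    (h : ∀ l : List G.S, μ (G.Cyl l) = ν (G.Cyl l)) : μ = ν := by
  refine MeasureTheory.ext_of_generate_finite G.CylSets G.gen_eq ?_ ?_ (by simp)
  · rintro s ⟨l1, rfl⟩ t ⟨l2, rfl⟩ hne
    obtain ⟨ρ, hρ1, hρ2⟩ := hne
    rcases le_total l1.length l2.length with hle | hle
    · have : G.Cyl l1 ∩ G.Cyl l2 = G.Cyl l2 := by
        apply Set.inter_eq_self_of_subset_right
        intro ρ' hρ' i hi
        rw [hρ' i (lt_of_lt_of_le hi hle), ← hρ2 i (lt_of_lt_of_le hi hle), hρ1 i hi]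
      rw [this]; exact ⟨l2, rfl⟩
    · have : G.Cyl l1 ∩ G.Cyl l2 = G.Cyl l1 := by
        apply Set.inter_eq_self_of_subset_left
        intro ρ' hρ' i hi
        rw [hρ' i (lt_of_lt_of_le hi hle), ← hρ1 i (lt_of_lt_of_le hi hle), hρ2 i hi]
      rw [this]; exact ⟨l1, rfl⟩
  · rintro s ⟨l, rfl⟩
    exact h l

lemma measure_cyl (Pr : G.Profile → Measure G.Run) (hPr : G.ValidPr Pr) (σv : G.Profile)
    (n : ℕ) (w : Fin (n + 1) → G.S) :
    Pr σv (G.Cyl (List.ofFn w)) = ENNReal.ofReal (G.chi σv (List.ofFn w)) := by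
  haveI := hPr.1 σv
  have hdisj : Pairwise (Function.onFun Disjoint
      fun w : Fin (n + 1) → G.S => G.Cyl (List.ofFn w)) := by
    intro w1 w2 hne
    rw [Function.onFun, Set.disjoint_left]
    intro ρ h1 h2
    apply hne
    funext j
    have e1 := h1 j.1 (by simp [j.2])
    have e2 := h2 j.1 (by simp [j.2])
    rw [G.getD_ofFn _ j.1 j.2] at e1 e2
    exact e1.symm.trans e2
  have hcover : (⋃ w : Fin (n + 1) → G.S, G.Cyl (List.ofFn w)) = Set.univ := by
    apply Set.eq_univ_iff_forall.2
    intro ρ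
    refine Set.mem_iUnion.2 ⟨fun j => ρ j.1, ?_⟩
    intro j hj
    rw [List.length_ofFn] at hj
    rw [G.getD_ofFn _ j hj]
  have h1 : ∑ w' : Fin (n + 1) → G.S, Pr σv (G.Cyl (List.ofFn w')) = 1 := by
    rw [← tsum_fintype (L := SummationFilter.unconditional _), ← measure_iUnion hdisj fun w' => G.measurableSet_cyl _, hcover,
      measure_univ]
  have h2 : ∑ w' : Fin (n + 1) → G.S, ENNReal.ofReal (G.chi σv (List.ofFn w')) = 1 := by
    rw [← ENNReal.ofReal_sum_of_nonneg fun w' _ => G.chi_nonneg σv _, G.chi_sum σv n,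
      ENNReal.ofReal_one]
  set A : Finset (Fin (n + 1) → G.S) :=
    Finset.univ.filter (fun w' => G.IsHistory (List.ofFn w')) with hA
  have hAgree : ∀ w' ∈ A, Pr σv (G.Cyl (List.ofFn w'))
      = ENNReal.ofReal (G.chi σv (List.ofFn w')) := by
    intro w' hw'
    rw [hA, Finset.mem_filter] at hw'
    rw [hPr.2 σv _ hw'.2]
    unfold ConcGame.chi
    rw [if_pos hw'.2.1]
  have hChiZero : ∀ w' ∉ A, G.chi σv (List.ofFn w') = 0 := by
    intro w' hw'
    rw [hA, Finset.mem_filter] at hw'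
    unfold ConcGame.chi
    by_cases hh : (List.ofFn w').head? = some G.init
    · rw [if_pos hh]
      apply G.cylProb_eq_zero_of_not_chain
      intro hchain
      exact hw' ⟨Finset.mem_univ _, hh, hchain⟩
    · rw [if_neg hh]
  by_cases hwA : w ∈ A
  · exact hAgree w hwA
  · rw [hChiZero w hwA, ENNReal.ofReal_zero]
    -- show the measure of this non-history cylinder is 0
    have hsplit1 := Finset.sum_filter_add_sum_filter_not Finset.univ
      (fun w' : Fin (n + 1) → G.S => G.IsHistory (List.ofFn w'))
      (fun w' => Pr σv (G.Cyl (List.ofFn w')))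
    have hsplit2 := Finset.sum_filter_add_sum_filter_not Finset.univ
      (fun w' : Fin (n + 1) → G.S => G.IsHistory (List.ofFn w'))
      (fun w' => ENNReal.ofReal (G.chi σv (List.ofFn w')))
    have hzero2 : ∑ w' ∈ Finset.univ.filter
        (fun w' : Fin (n + 1) → G.S => ¬ G.IsHistory (List.ofFn w')),
        ENNReal.ofReal (G.chi σv (List.ofFn w')) = 0 := by
      apply Finset.sum_eq_zero
      intro w' hw'
      rw [Finset.mem_filter] at hw'
      rw [hChiZero w' (by rw [hA, Finset.mem_filter]; tauto), ENNReal.ofReal_zero]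
    have hAeq : ∑ w' ∈ A, Pr σv (G.Cyl (List.ofFn w'))
        = ∑ w' ∈ A, ENNReal.ofReal (G.chi σv (List.ofFn w')) :=
      Finset.sum_congr rfl hAgree
    have hA1 : ∑ w' ∈ A, ENNReal.ofReal (G.chi σv (List.ofFn w')) = 1 := by
      rw [← h2, ← hsplit2, hzero2, add_zero]
    have hrest : ∑ w' ∈ Finset.univ.filter
        (fun w' : Fin (n + 1) → G.S => ¬ G.IsHistory (List.ofFn w')),
        Pr σv (G.Cyl (List.ofFn w')) = 0 := by
      have e1 : ∑ w' ∈ A, Pr σv (G.Cyl (List.ofFn w'))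
          + ∑ w' ∈ Finset.univ.filter
            (fun w' : Fin (n + 1) → G.S => ¬ G.IsHistory (List.ofFn w')),
            Pr σv (G.Cyl (List.ofFn w')) = 1 := by
        rw [hA, hsplit1]; exact h1
      rw [hAeq, hA1] at e1
      exact (ENNReal.add_right_inj ENNReal.one_ne_top).1 (e1.trans (add_zero 1).symm)
    have := (Finset.sum_eq_zero_iff.1 hrest) w
      (by simp only [hA, Finset.mem_filter, Finset.mem_univ, true_and] at hwA ⊢; exact hwA)
    exact this

end Stmt2Aux3

section Stmt2Aux4

open MeasureTheory

variable (G : ConcGame)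

lemma measure_cyl' (Pr : G.Profile → Measure G.Run) (hPr : G.ValidPr Pr) (σv : G.Profile)
    (w : List G.S) (hw : w ≠ []) :
    Pr σv (G.Cyl w) = ENNReal.ofReal (G.chi σv w) := by
  obtain ⟨n, hn⟩ : ∃ n, w.length = n + 1 := by
    have := List.length_pos_iff.2 hw; exact ⟨w.length - 1, by omega⟩
  have hofn : List.ofFn (fun i : Fin (n + 1) => w.getD i.1 G.init) = w := by
    apply List.ext_getElem (by simp [hn])
    intro i h1 h2
    rw [List.getElem_ofFn]
    rw [List.getD_eq_getElem _ _ h2]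
  have := G.measure_cyl Pr hPr σv n (fun i : Fin (n + 1) => w.getD i.1 G.init)
  rwa [hofn] at this

lemma combine_updS_val_ne {p : G.P} (l : List G.S) (σ : G.Strategy p) (τ : G.CoStrategy p)
    (c : G.A) (q : G.P) {t : List G.S} (h : t ≠ l) :
    (G.combine (G.updS l σ c) τ q t).1 = (G.combine σ τ q t).1 := by
  by_cases hq : q = p
  · subst hq
    rw [G.combine_apply_self, G.combine_apply_self, G.updS_apply_ne l σ c h]
  · rw [G.combine_apply_ne _ _ hq, G.combine_apply_ne _ _ hq]

lemma cylProb_updS_eq {p : G.P} (l : List G.S) (σ : G.Strategy p) (τ : G.CoStrategy p)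
    (c : G.A) (w : List G.S) (hnp : ¬ (l <+: w ∧ l.length < w.length)) :
    G.cylProb (G.combine (G.updS l σ c) τ) w = G.cylProb (G.combine σ τ) w := by
  unfold ConcGame.cylProb
  apply Finset.prod_congr rfl
  intro i hi
  rw [Finset.mem_range] at hi
  have hne : w.take (i + 1) ≠ l := by
    intro h
    apply hnp
    have hlen : (w.take (i + 1)).length = i + 1 := by rw [List.length_take]; omega
    constructor
    · rw [← h]; exact List.take_prefix _ _
    · rw [← h, hlen]; omega
  congr 1
  funext q
  exact G.combine_updS_val_ne l σ τ c q hne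

lemma stepProb_mix {p : G.P} {s0 s s' : G.S} (α' : G.Mixed p s0)
    (β : G.P → G.A → ℝ) (βc : G.A → G.P → G.A → ℝ)
    (hβp : β p = α'.1)
    (hne : ∀ c q, q ≠ p → βc c q = β q)
    (hp : ∀ c, α'.1 c ≠ 0 → βc c p = fun x => if x = c then 1 else 0) :
    ∑ c, α'.1 c * G.stepProb s (βc c) s' = G.stepProb s β s' := by
  unfold ConcGame.stepProb
  simp_rw [Finset.mul_sum]
  rw [Finset.sum_comm]
  apply Finset.sum_congr rfl
  intro m _
  have hsplit : ∀ c, ∏ q, βc c q (m q)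
      = βc c p (m p) * ∏ q ∈ Finset.univ.erase p, β q (m q) := by
    intro c
    rw [← Finset.mul_prod_erase Finset.univ _ (Finset.mem_univ p)]
    congr 1
    exact Finset.prod_congr rfl fun q hq => by
      rw [hne c q (Finset.ne_of_mem_erase hq)]
  have hterm : ∀ c, α'.1 c * ∏ q, βc c q (m q)
      = (if c = m p then α'.1 c * ∏ q ∈ Finset.univ.erase p, β q (m q) else 0) := by
    intro c
    by_cases h0 : α'.1 c = 0
    · rw [h0, zero_mul]
      split
      · rw [zero_mul]
      · rfl
    · rw [hsplit c, hp c h0]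
      by_cases hc : c = m p
      · simp [hc]
      · simp [hc, Ne.symm hc]
  rw [Finset.sum_congr rfl fun c _ => hterm c,
    Finset.sum_ite_eq' Finset.univ (m p)
      (fun c => α'.1 c * ∏ q ∈ Finset.univ.erase p, β q (m q)),
    if_pos (Finset.mem_univ _), ← congrFun hβp (m p)]
  exact Finset.mul_prod_erase Finset.univ (fun q => β q (m q)) (Finset.mem_univ p)

lemma cylProb_decomp {p : G.P} (l : List G.S) (hl0 : l ≠ []) (α' : G.Mixed p (G.lastS l))
    (σ : G.Strategy p) (hσ : σ l = α') (τ : G.CoStrategy p) (w : List G.S) :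
    G.cylProb (G.combine σ τ) w
      = ∑ c, α'.1 c * G.cylProb (G.combine (G.updS l σ c) τ) w := by
  by_cases hpre : l <+: w ∧ l.length < w.length
  · obtain ⟨hp1, hp2⟩ := hpre
    have hl1 : 1 ≤ l.length := List.length_pos_iff.2 hl0
    set i₀ := l.length - 1 with hi₀
    have hmem : i₀ ∈ Finset.range (w.length - 1) := Finset.mem_range.2 (by omega)
    have htake : w.take (i₀ + 1) = l := by
      have e : i₀ + 1 = l.length := by omega
      rw [e, ← List.prefix_iff_eq_take.1 hp1]
    unfold ConcGame.cylProb
    rw [← Finset.mul_prod_erase _ _ hmem]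
    have hrw : ∀ c, ∏ i ∈ Finset.range (w.length - 1),
        G.stepProb (G.lastS (w.take (i + 1)))
          (fun q => (G.combine (G.updS l σ c) τ q (w.take (i + 1))).1)
          (G.lastS (w.take (i + 2)))
        = G.stepProb (G.lastS (w.take (i₀ + 1)))
            (fun q => (G.combine (G.updS l σ c) τ q (w.take (i₀ + 1))).1)
            (G.lastS (w.take (i₀ + 2)))
          * ∏ i ∈ (Finset.range (w.length - 1)).erase i₀,
              G.stepProb (G.lastS (w.take (i + 1)))
                (fun q => (G.combine σ τ q (w.take (i + 1))).1)
                (G.lastS (w.take (i + 2))) := by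
      intro c
      rw [← Finset.mul_prod_erase _ _ hmem]
      congr 1
      apply Finset.prod_congr rfl
      intro i hi
      have hine : i ≠ i₀ := Finset.ne_of_mem_erase hi
      have hi' := Finset.mem_of_mem_erase hi
      rw [Finset.mem_range] at hi'
      have hne : w.take (i + 1) ≠ l := by
        intro h
        apply hine
        have hlen : (w.take (i + 1)).length = i + 1 := by rw [List.length_take]; omega
        have : l.length = i + 1 := by rw [← h, hlen]
        omega
      congr 1
      funext q
      exact G.combine_updS_val_ne l σ τ c q hne
    simp_rw [hrw, ← mul_assoc]
    rw [← Finset.sum_mul]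
    congr 1
    -- the key one-step mixing identity, at the special factor
    rw [htake]
    exact (G.stepProb_mix α'
      (fun q => (G.combine σ τ q l).1)
      (fun c q => (G.combine (G.updS l σ c) τ q l).1)
      (by show (G.combine σ τ p l).1 = α'.1
          rw [G.combine_apply_self, hσ])
      (fun c q hq => by
        show (G.combine (G.updS l σ c) τ q l).1 = (G.combine σ τ q l).1
        rw [G.combine_apply_ne _ _ hq, G.combine_apply_ne _ _ hq])
      (fun c h0 => by
        show (G.combine (G.updS l σ c) τ p l).1 = _
        rw [G.combine_apply_self]
        exact G.updS_val_self l σ (α'.2.2.2 c h0))).symm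
  · have heq : ∀ c, G.cylProb (G.combine (G.updS l σ c) τ) w
        = G.cylProb (G.combine σ τ) w :=
      fun c => G.cylProb_updS_eq l σ τ c w hpre
    simp_rw [heq]
    rw [← Finset.sum_mul, α'.2.2.1, one_mul]

end Stmt2Aux4

section Stmt2Aux5

open MeasureTheory

variable (G : ConcGame)

lemma measure_decomp (Pr : G.Profile → Measure G.Run) (hPr : G.ValidPr Pr)
    {p : G.P} {l : List G.S} (hl0 : l ≠ []) (α' : G.Mixed p (G.lastS l))
    (σ : G.Strategy p) (hσ : σ l = α') (τ : G.CoStrategy p) :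
    Pr (G.combine σ τ)
      = ∑ c, ENNReal.ofReal (α'.1 c) • Pr (G.combine (G.updS l σ c) τ) := by
  haveI := hPr.1 (G.combine σ τ)
  have hones : ∑ c, ENNReal.ofReal (α'.1 c) = 1 := by
    rw [← ENNReal.ofReal_sum_of_nonneg fun c _ => α'.2.1 c, α'.2.2.1, ENNReal.ofReal_one]
  haveI : IsProbabilityMeasure
      (∑ c, ENNReal.ofReal (α'.1 c) • Pr (G.combine (G.updS l σ c) τ)) := by
    constructor
    rw [Measure.finset_sum_apply]
    have : ∀ c, (ENNReal.ofReal (α'.1 c) • Pr (G.combine (G.updS l σ c) τ)) Set.univ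
        = ENNReal.ofReal (α'.1 c) := by
      intro c
      haveI := hPr.1 (G.combine (G.updS l σ c) τ)
      rw [Measure.smul_apply, smul_eq_mul, measure_univ, mul_one]
    rw [Finset.sum_congr rfl fun c _ => this c]
    exact hones
  refine G.measure_ext_cyl _ _ ?_
  intro w
  rw [Measure.finset_sum_apply]
  rcases eq_or_ne w [] with rfl | hw
  · have hcyl : G.Cyl [] = Set.univ := by
      ext ρ; simp [ConcGame.Cyl]
    rw [hcyl, measure_univ]
    have : ∀ c, (ENNReal.ofReal (α'.1 c) • Pr (G.combine (G.updS l σ c) τ)) Set.univ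
        = ENNReal.ofReal (α'.1 c) := by
      intro c
      haveI := hPr.1 (G.combine (G.updS l σ c) τ)
      rw [Measure.smul_apply, smul_eq_mul, measure_univ, mul_one]
    rw [Finset.sum_congr rfl fun c _ => this c]
    exact hones.symm
  · rw [G.measure_cyl' Pr hPr _ w hw]
    have hterm : ∀ c, (ENNReal.ofReal (α'.1 c) • Pr (G.combine (G.updS l σ c) τ)) (G.Cyl w)
        = ENNReal.ofReal (α'.1 c * G.chi (G.combine (G.updS l σ c) τ) w) := by
      intro c
      rw [Measure.smul_apply, smul_eq_mul, G.measure_cyl' Pr hPr _ w hw,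
        ENNReal.ofReal_mul (α'.2.1 c)]
    rw [Finset.sum_congr rfl fun c _ => hterm c,
      ← ENNReal.ofReal_sum_of_nonneg fun c _ =>
        mul_nonneg (α'.2.1 c) (G.chi_nonneg _ w)]
    congr 1
    unfold ConcGame.chi
    by_cases hh : w.head? = some G.init
    · simp only [if_pos hh]
      exact G.cylProb_decomp l hl0 α' σ hσ τ w
    · simp only [if_neg hh, mul_zero]
      rw [Finset.sum_const, smul_zero]

set_option maxHeartbeats 1000000 in
lemma wins_transfer (Pr : G.Profile → Measure G.Run) (hPr : G.ValidPr Pr)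
    (st : Sem) {p : G.P} {l : List G.S} (hl0 : l ≠ [])
    (α' : G.Mixed p (G.lastS l)) (σ : G.Strategy p) (hσ : σ l = α')
    {b : G.A} (hb : α'.1 b ≠ 0) (Φ : Set G.Run) (τ : G.CoStrategy p)
    (hwin : G.Wins Pr st (G.combine σ τ) Φ) :
    G.Wins Pr st (G.combine (G.updS l σ b) τ) Φ := by
  have hbpos : 0 < α'.1 b := lt_of_le_of_ne (α'.2.1 b) (Ne.symm hb)
  cases st with
  | Sure =>
    intro ρ hρ
    apply hwin
    intro k
    obtain ⟨hh, hpos⟩ := hρ k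
    refine ⟨hh, ?_⟩
    rw [G.cylProb_decomp l hl0 α' σ hσ τ (G.prefixList ρ k)]
    have hle : α'.1 b * G.cylProb (G.combine (G.updS l σ b) τ) (G.prefixList ρ k)
        ≤ ∑ c, α'.1 c * G.cylProb (G.combine (G.updS l σ c) τ) (G.prefixList ρ k) :=
      Finset.single_le_sum
        (f := fun c => α'.1 c * G.cylProb (G.combine (G.updS l σ c) τ) (G.prefixList ρ k))
        (fun c _ => mul_nonneg (α'.2.1 c) (G.cylProb_nonneg _ _)) (Finset.mem_univ b)
    exact lt_of_lt_of_le (mul_pos hbpos hpos) hle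
  | Almost =>
    show Pr (G.combine (G.updS l σ b) τ) Φ = 1
    have hwin' : Pr (G.combine σ τ) Φ = 1 := hwin
    have hdec := G.measure_decomp Pr hPr hl0 α' σ hσ τ
    haveI : ∀ c, IsProbabilityMeasure (Pr (G.combine (G.updS l σ c) τ)) :=
      fun c => hPr.1 _
    have h1 : ∑ c, ENNReal.ofReal (α'.1 c) * Pr (G.combine (G.updS l σ c) τ) Φ = 1 := by
      rw [← hwin', hdec, Measure.finset_sum_apply]
      exact Finset.sum_congr rfl fun c _ => by rw [Measure.smul_apply, smul_eq_mul]
    have hones : ∑ c, ENNReal.ofReal (α'.1 c) = 1 := by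
      rw [← ENNReal.ofReal_sum_of_nonneg fun c _ => α'.2.1 c, α'.2.2.1, ENNReal.ofReal_one]
    by_contra hne
    have hlt : Pr (G.combine (G.updS l σ b) τ) Φ < 1 :=
      lt_of_le_of_ne prob_le_one hne
    have hterm : ∀ c, ENNReal.ofReal (α'.1 c) * Pr (G.combine (G.updS l σ c) τ) Φ
        ≤ ENNReal.ofReal (α'.1 c) := fun c => by
      calc ENNReal.ofReal (α'.1 c) * Pr (G.combine (G.updS l σ c) τ) Φ
          ≤ ENNReal.ofReal (α'.1 c) * 1 := mul_le_mul_right prob_le_one _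
        _ = ENNReal.ofReal (α'.1 c) := mul_one _
    have hb0 : (0 : ENNReal) < ENNReal.ofReal (α'.1 b) := ENNReal.ofReal_pos.2 hbpos
    have hbt : ENNReal.ofReal (α'.1 b) ≠ ⊤ := ENNReal.ofReal_ne_top
    have hbterm : ENNReal.ofReal (α'.1 b) * Pr (G.combine (G.updS l σ b) τ) Φ
        < ENNReal.ofReal (α'.1 b) := by
      calc ENNReal.ofReal (α'.1 b) * Pr (G.combine (G.updS l σ b) τ) Φ
          < ENNReal.ofReal (α'.1 b) * 1 :=
            (ENNReal.mul_lt_mul_iff_right (ne_of_gt hb0) hbt).2 hlt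
        _ = ENNReal.ofReal (α'.1 b) := mul_one _
    have hstrict : ∑ c, ENNReal.ofReal (α'.1 c) * Pr (G.combine (G.updS l σ c) τ) Φ
        < ∑ c, ENNReal.ofReal (α'.1 c) := by
      rw [← Finset.add_sum_erase _ _ (Finset.mem_univ b),
        ← Finset.add_sum_erase _ (fun c => ENNReal.ofReal (α'.1 c)) (Finset.mem_univ b)]
      have hsumle : ∑ c ∈ Finset.univ.erase b,
          ENNReal.ofReal (α'.1 c) * Pr (G.combine (G.updS l σ c) τ) Φ
          ≤ ∑ c ∈ Finset.univ.erase b, ENNReal.ofReal (α'.1 c) :=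
        Finset.sum_le_sum fun c _ => hterm c
      have hfin : ∑ c ∈ Finset.univ.erase b, ENNReal.ofReal (α'.1 c) ≠ ⊤ := by
        apply ne_of_lt
        apply lt_of_le_of_lt (Finset.sum_le_sum_of_subset (Finset.subset_univ _))
        rw [hones]
        exact ENNReal.one_lt_top
      have hfin2 : ∑ c ∈ Finset.univ.erase b,
          ENNReal.ofReal (α'.1 c) * Pr (G.combine (G.updS l σ c) τ) Φ ≠ ⊤ :=
        ne_top_of_le_ne_top hfin hsumle
      exact ENNReal.add_lt_add_of_lt_of_le hfin2 hbterm hsumle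
    rw [h1, hones] at hstrict
    exact lt_irrefl _ hstrict

end Stmt2Aux5
end ConcGame

/-- Dirac moves not dominated at `l` by any Dirac move are admissible at `l`. -/
theorem stmt2 (G : ConcGame) (win : G.P → Set G.Run)
    (hwin : ∀ p, MeasurableSet (win p))
    (Pr : G.Profile → Measure G.Run) (hPr : G.ValidPr Pr)
    (st : ConcGame.Sem) (p : G.P) (l : List G.S) (hl : G.IsHistory l)
    (a : G.A) (ha : a ∈ G.act p (G.lastS l))
    (hnd : ∀ α' : G.Mixed p (G.lastS l), G.IsDirac α' →
      ¬ G.MSDom Pr win st l (G.dirac p (G.lastS l) a ha) α') :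
    G.MAdmissible Pr win st l (G.dirac p (G.lastS l) a ha) := by
  intro α' hdom
  obtain ⟨W1, W2⟩ := hdom
  have hl0 : l ≠ [] := by
    intro h
    rw [h] at hl
    simp [ConcGame.IsHistory] at hl
  obtain ⟨b, hb⟩ : ∃ b, α'.1 b ≠ 0 := by
    by_contra h
    push_neg at h
    have hs := α'.2.2.1
    rw [Finset.sum_eq_zero (fun c _ => h c)] at hs
    exact zero_ne_one hs
  have hbact : b ∈ G.act p (G.lastS l) := α'.2.2.2 b hb
  apply hnd (G.dirac p (G.lastS l) b hbact) ⟨b, by simp [ConcGame.dirac]⟩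
  constructor
  · -- the Dirac move on `b` weakly dominates the Dirac move on `a` at `l`
    intro σ hσh hσl
    obtain ⟨σ'', hσ''l, hWD⟩ := W1 σ hσh hσl
    refine ⟨G.updS l σ'' b, G.updS_apply_self l σ'' hbact, ?_⟩
    intro τ hwin'
    exact G.wins_transfer Pr hPr st hl0 α' σ'' hσ''l hb (win p) τ (hWD τ hwin')
  · -- and it is not weakly dominated by the Dirac move on `a`
    intro hM
    apply W2
    intro σ₀ hσ₀h hσ₀l
    have hσ₀bh : l ∈ G.HistOfS (G.updS l σ₀ b) := by
      obtain ⟨τ₀, hmem⟩ := Set.mem_iUnion.1 hσ₀h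
      refine Set.mem_iUnion.2 ⟨τ₀, ?_⟩
      obtain ⟨hhist, hpos⟩ := hmem
      refine ⟨hhist, ?_⟩
      rw [G.cylProb_updS_eq l σ₀ τ₀ b l (by simp)]
      exact hpos
    obtain ⟨σ', hσ'l, hWD'⟩ := hM (G.updS l σ₀ b) hσ₀bh (G.updS_apply_self l σ₀ hbact)
    refine ⟨σ', hσ'l, ?_⟩
    intro τ hwin'
    exact hWD' τ (G.wins_transfer Pr hPr st hl0 α' σ₀ hσ₀l hb (win p) τ hwin')
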